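/- arXiv:1908.04179 — 4 statements merged into one kernel-verified Lean document; each statement's English description precedes it below -/
import Mathlib

section
/- If (Y, Z) is centered bivariate normal with standard deviations σ_y, σ_z > 0 and correlation ξ with |ξ| < 1, and f denotes its density, then ∫₀^∞ ∫₀^∞ 2|y - z| f(y,z) dy dz = (1/√(2π))·(-(1-ξ)(σ_y + σ_z) + 2√(σ_y² - 2ξσ_yσ_z + σ_z²)). -/
open Real

/-- Centered bivariate normal density with standard deviations `σy, σz` and correlation `ξ`. -/
noncomputable def bvnDensity (σy σz ξ y z : ℝ) : ℝ :=
  (1 / (2 * π * Real.sqrt (1 - ξ ^ 2) * σy * σz)) *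
    Real.exp (-(1 / (2 * (1 - ξ ^ 2))) *
      (y ^ 2 / σy ^ 2 - 2 * ξ * y * z / (σy * σz) + z ^ 2 / σz ^ 2))

open Real MeasureTheory Set Filter Topology


noncomputable def gK (t : ℝ) : ℝ := Real.exp (-(1/2) * t ^ 2)

lemma gK_cont : Continuous gK := by
  unfold gK; continuity

lemma gK_int : Integrable gK := integrable_exp_neg_mul_sq (by norm_num)

lemma gK_nonneg (t : ℝ) : 0 ≤ gK t := (Real.exp_pos _).le

lemma integral_gK : ∫ t, gK t = Real.sqrt (2 * π) := by
  unfold gK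
  rw [integral_gaussian]
  rw [show π / (1/2 : ℝ) = 2 * π by ring]

noncomputable def gaussK : ℝ := ∫ t in Ioi (0:ℝ), gK t

lemma gaussK_eq : gaussK = Real.sqrt (2 * π) / 2 := by
  unfold gaussK gK
  rw [integral_gaussian_Ioi]
  rw [show π / (1/2 : ℝ) = 2 * π by ring]

noncomputable def Psi (x : ℝ) : ℝ := gaussK - ∫ t in (0:ℝ)..x, gK t

lemma Psi_zero : Psi 0 = Real.sqrt (2 * π) / 2 := by
  simp [Psi, gaussK_eq]

lemma Psi_eq (x : ℝ) : Psi x = ∫ t in Ioi x, gK t := by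
  unfold Psi gaussK
  rcases le_or_gt 0 x with h | h
  · have key : (∫ t in Ioc (0:ℝ) x, gK t) + ∫ t in Ioi x, gK t = ∫ t in Ioi (0:ℝ), gK t := by
      rw [← setIntegral_union (Ioc_disjoint_Ioi le_rfl) measurableSet_Ioi
        gK_int.integrableOn gK_int.integrableOn, Ioc_union_Ioi_eq_Ioi h]
    rw [intervalIntegral.integral_of_le h]
    linarith
  · have key : (∫ t in Ioc x (0:ℝ), gK t) + ∫ t in Ioi (0:ℝ), gK t = ∫ t in Ioi x, gK t := by
      rw [← setIntegral_union (Ioc_disjoint_Ioi le_rfl) measurableSet_Ioi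
        gK_int.integrableOn gK_int.integrableOn, Ioc_union_Ioi_eq_Ioi h.le]
    rw [intervalIntegral.integral_of_ge h.le]
    linarith

lemma Psi_nonneg (x : ℝ) : 0 ≤ Psi x := by
  rw [Psi_eq]
  exact setIntegral_nonneg measurableSet_Ioi fun t _ => gK_nonneg t

lemma Psi_le (x : ℝ) : Psi x ≤ Real.sqrt (2 * π) := by
  rw [Psi_eq, ← integral_gK]
  exact setIntegral_le_integral gK_int (Eventually.of_forall fun t => gK_nonneg t)

lemma abs_Psi_le (x : ℝ) : |Psi x| ≤ Real.sqrt (2 * π) := by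
  rw [abs_of_nonneg (Psi_nonneg x)]; exact Psi_le x

lemma hasDerivAt_Psi (x : ℝ) : HasDerivAt Psi (-(gK x)) x := by
  have h : HasDerivAt (fun x => ∫ t in (0:ℝ)..x, gK t) (gK x) x :=
    intervalIntegral.integral_hasDerivAt_right gK_int.intervalIntegrable
      gK_cont.aestronglyMeasurable.stronglyMeasurableAtFilter
      gK_cont.continuousAt
  have := (hasDerivAt_const x gaussK).sub h
  rw [zero_sub] at this
  exact this

lemma Psi_cont : Continuous Psi :=
  continuous_iff_continuousAt.2 fun x => (hasDerivAt_Psi x).continuousAt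

lemma Psi_tendsto : Tendsto Psi atTop (𝓝 0) := by
  have h := intervalIntegral_tendsto_integral_Ioi (μ := volume) 0 gK_int.integrableOn
    (tendsto_id (α := ℝ))
  have : Tendsto Psi atTop (𝓝 (gaussK - ∫ t in Ioi (0:ℝ), gK t)) :=
    (tendsto_const_nhds.sub h)
  simpa [gaussK] using this

section lemmas
variable {τ m z : ℝ}

lemma gK_affine (hτ : 0 < τ) (y : ℝ) :
    Real.exp (-((y - m)^2) / (2*τ^2)) = gK ((y - m)/τ) := by
  unfold gK
  congr 1
  field_simp

lemma integrable_gK_affine (hτ : 0 < τ) :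
    Integrable (fun y : ℝ => Real.exp (-((y - m)^2) / (2*τ^2))) := by
  have h1 : Integrable (fun y : ℝ => gK (y / τ)) := gK_int.comp_div hτ.ne'
  have h2 : Integrable (fun y : ℝ => gK ((y - m) / τ)) := by
    simpa [sub_div] using h1.comp_sub_right m
  exact h2.congr (Eventually.of_forall fun y => (gK_affine hτ y).symm)

lemma integrable_moment_gK_affine (hτ : 0 < τ) :
    Integrable (fun y : ℝ => (y - m) * Real.exp (-((y - m)^2) / (2*τ^2))) := by
  have h0 : Integrable (fun x : ℝ => x * Real.exp (-(1/2) * x ^ 2)) :=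
    integrable_mul_exp_neg_mul_sq (by norm_num)
  have h1 : Integrable (fun y : ℝ => (y/τ) * gK (y / τ)) := by
    have := h0.comp_div (g := fun x : ℝ => x * Real.exp (-(1/2) * x ^ 2)) hτ.ne'
    simpa [gK] using this
  have h2 : Integrable (fun y : ℝ => ((y - m)/τ) * gK ((y - m) / τ)) := by
    simpa using h1.comp_sub_right m
  have h3 := h2.const_mul τ
  refine h3.congr (Eventually.of_forall fun y => ?_)
  simp only [gK_affine hτ y]
  field_simp

end lemmas

section main
variable {τ m z a c : ℝ}

lemma hasDerivAt_inner (hτ : 0 < τ) (y : ℝ) :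
    HasDerivAt (fun y : ℝ => -τ * Psi ((y - m)/τ)) (Real.exp (-((y - m)^2) / (2*τ^2))) y := by
  have hin : HasDerivAt (fun y : ℝ => (y - m)/τ) (1/τ) y := by
    simpa using ((hasDerivAt_id y).sub_const m).div_const τ
  have h := ((hasDerivAt_Psi ((y - m)/τ)).comp y hin).const_mul (-τ)
  refine h.congr_deriv ?_
  rw [gK_affine hτ]
  field_simp

-- Lemma A
lemma integral_Ioi_gauss_tail (hτ : 0 < τ) :
    ∫ y in Ioi z, Real.exp (-((y - m)^2) / (2*τ^2)) = τ * Psi ((z - m)/τ) := by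
  have hlim : Tendsto (fun y : ℝ => -τ * Psi ((y - m)/τ)) atTop (𝓝 0) := by
    have h1 : Tendsto (fun y : ℝ => (y - m)/τ) atTop atTop :=
      (tendsto_id.atTop_add tendsto_const_nhds).atTop_div_const hτ
    have := (Psi_tendsto.comp h1).const_mul (-τ)
    simpa using this
  have := integral_Ioi_of_hasDerivAt_of_tendsto' (a := z)
    (fun y _ => hasDerivAt_inner (m := m) hτ y)
    (integrable_gK_affine (m := m) hτ).integrableOn hlim
  rw [this]; ring

-- Lemma B
lemma integral_Ioi_gauss_moment (hτ : 0 < τ) :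
    ∫ y in Ioi z, (y - m) * Real.exp (-((y - m)^2) / (2*τ^2))
      = τ^2 * Real.exp (-((z - m)^2) / (2*τ^2)) := by
  have hd : ∀ y : ℝ, HasDerivAt (fun y : ℝ => -τ^2 * Real.exp (-((y - m)^2) / (2*τ^2)))
      ((y - m) * Real.exp (-((y - m)^2) / (2*τ^2))) y := by
    intro y
    have hin : HasDerivAt (fun y : ℝ => -((y - m)^2) / (2*τ^2)) (-(y-m)/τ^2) y := by
      have : HasDerivAt (fun y : ℝ => -((y - m)^2)) (-(2*(y-m))) y := by
        exact ((((hasDerivAt_id y).sub_const m).pow 2).neg).congr_deriv (by simp)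
      refine (this.div_const (2*τ^2)).congr_deriv ?_
      field_simp
    have := (hin.exp).const_mul (-τ^2)
    refine this.congr_deriv ?_
    field_simp
  have hlim : Tendsto (fun y : ℝ => -τ^2 * Real.exp (-((y - m)^2) / (2*τ^2))) atTop (𝓝 0) := by
    have h1 : Tendsto (fun y : ℝ => -((y - m)^2) / (2*τ^2)) atTop atBot := by
      apply Tendsto.atBot_div_const (by positivity)
      have : Tendsto (fun y : ℝ => (y - m)^2) atTop atTop :=
        (tendsto_pow_atTop (by norm_num)).comp (tendsto_id.atTop_add tendsto_const_nhds)
      exact tendsto_neg_atBot_iff.mpr this |>.congr (fun y => rfl)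
    have := (Real.tendsto_exp_atBot.comp h1).const_mul (-τ^2)
    simpa using this
  have := integral_Ioi_of_hasDerivAt_of_tendsto' (a := z) (fun y _ => hd y)
    (integrable_moment_gK_affine (m := m) hτ).integrableOn hlim
  rw [this]; ring

-- Lemma C
lemma integral_interval_gauss (hτ : 0 < τ) :
    ∫ y in (0:ℝ)..z, Real.exp (-((y - m)^2) / (2*τ^2))
      = τ * Psi ((0 - m)/τ) - τ * Psi ((z - m)/τ) := by
  have := intervalIntegral.integral_eq_sub_of_hasDerivAt (a := (0:ℝ)) (b := z)
    (f := fun y : ℝ => -τ * Psi ((y - m)/τ))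
    (fun y _ => hasDerivAt_inner (m := m) hτ y)
    ((integrable_gK_affine (m := m) hτ).intervalIntegrable)
  rw [this]; ring

-- Lemma D
lemma integral_interval_gauss_moment (hτ : 0 < τ) :
    ∫ y in (0:ℝ)..z, (m - y) * Real.exp (-((y - m)^2) / (2*τ^2))
      = τ^2 * Real.exp (-((z - m)^2) / (2*τ^2)) - τ^2 * Real.exp (-((0 - m)^2) / (2*τ^2)) := by
  have hd : ∀ y : ℝ, HasDerivAt (fun y : ℝ => τ^2 * Real.exp (-((y - m)^2) / (2*τ^2)))
      ((m - y) * Real.exp (-((y - m)^2) / (2*τ^2))) y := by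
    intro y
    have hin : HasDerivAt (fun y : ℝ => -((y - m)^2) / (2*τ^2)) (-(y-m)/τ^2) y := by
      have : HasDerivAt (fun y : ℝ => -((y - m)^2)) (-(2*(y-m))) y := by
        exact ((((hasDerivAt_id y).sub_const m).pow 2).neg).congr_deriv (by simp)
      refine (this.div_const (2*τ^2)).congr_deriv ?_
      field_simp
    have := (hin.exp).const_mul (τ^2)
    refine this.congr_deriv ?_
    field_simp; ring
  have hint : IntervalIntegrable (fun y : ℝ => (m - y) * Real.exp (-((y - m)^2) / (2*τ^2)))
      volume 0 z := by
    have := (integrable_moment_gK_affine (m := m) hτ).neg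
    refine (this.congr (Eventually.of_forall fun y => by simp; ring)).intervalIntegrable
  have := intervalIntegral.integral_eq_sub_of_hasDerivAt (fun y _ => hd y) hint
  rw [this]

end main

section lemmaL
variable {a c : ℝ}

lemma integrable_psi_moment (ha : 0 < a) (c : ℝ) :
    Integrable (fun z : ℝ => z * Real.exp (-a * z^2) * Psi (c * z)) := by
  have hg : Integrable (fun z : ℝ => Real.sqrt (2*π) * |z * Real.exp (-a * z^2)|) :=
    ((integrable_mul_exp_neg_mul_sq ha).abs.const_mul _)
  refine hg.mono' ?_ (Eventually.of_forall fun z => ?_)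
  · exact (((continuous_id.mul (by continuity : Continuous fun z : ℝ => Real.exp (-a * z^2))).mul
      (Psi_cont.comp (continuous_const.mul continuous_id)))).aestronglyMeasurable
  · rw [Real.norm_eq_abs, abs_mul]
    calc |z * Real.exp (-a * z^2)| * |Psi (c*z)|
        ≤ |z * Real.exp (-a * z^2)| * Real.sqrt (2*π) :=
          mul_le_mul_of_nonneg_left (abs_Psi_le _) (abs_nonneg _)
      _ = Real.sqrt (2*π) * |z * Real.exp (-a * z^2)| := by ring

lemma integral_psi_moment (ha : 0 < a) (c : ℝ) :
    ∫ z in Ioi (0:ℝ), z * Real.exp (-a * z^2) * Psi (c * z)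
      = gaussK / (2*a) - (c/(2*a)) * (Real.sqrt (π/(a + c^2/2)) / 2) := by
  set F : ℝ → ℝ := fun z => -(1/(2*a)) * (Real.exp (-a * z^2) * Psi (c * z)) with hF
  have hd : ∀ y : ℝ, HasDerivAt F
      (y * Real.exp (-a * y^2) * Psi (c * y)
        + (c/(2*a)) * Real.exp (-(a + c^2/2) * y^2)) y := by
    intro y
    have he : HasDerivAt (fun y : ℝ => Real.exp (-a * y^2)) (-2*a*y * Real.exp (-a*y^2)) y := by
      have hin : HasDerivAt (fun y : ℝ => -a * y^2) (-2*a*y) y := by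
        have h := (hasDerivAt_pow 2 y).const_mul (-a)
        refine h.congr_deriv ?_
        push_cast; ring
      simpa [mul_comm] using hin.exp
    have hp : HasDerivAt (fun y : ℝ => Psi (c * y)) (-(gK (c*y)) * c) y := by
      have hin : HasDerivAt (fun y : ℝ => c * y) c y := by
        simpa using (hasDerivAt_id y).const_mul c
      exact (hasDerivAt_Psi (c*y)).comp y hin
    have := ((he.mul hp).const_mul (-(1/(2*a))))
    refine this.congr_deriv ?_
    have hgg : Real.exp (-a * y^2) * gK (c*y) = Real.exp (-(a + c^2/2) * y^2) := by
      rw [gK, ← Real.exp_add]; congr 1; ring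
    rw [← hgg]
    field_simp
    ring
  have hlim : Tendsto F atTop (𝓝 0) := by
    refine squeeze_zero_norm (a := fun z : ℝ => (1/(2*a)) * Real.sqrt (2*π) * Real.exp (-a * z^2)) (f := F) (fun z => ?_) ?_
    · rw [hF]
      simp only [norm_mul, norm_neg, Real.norm_eq_abs]
      rw [abs_of_nonneg (by positivity : (0:ℝ) ≤ 1/(2*a)),
        abs_of_nonneg (Real.exp_pos _).le]
      have := abs_Psi_le (c*z)
      calc 1/(2*a) * (Real.exp (-a*z^2) * |Psi (c*z)|)
          ≤ 1/(2*a) * (Real.exp (-a*z^2) * Real.sqrt (2*π)) :=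
            mul_le_mul_of_nonneg_left
              (mul_le_mul_of_nonneg_left this (Real.exp_pos _).le) (by positivity)
        _ = 1/(2*a) * Real.sqrt (2*π) * Real.exp (-a*z^2) := by ring
    · have h1 : Tendsto (fun z : ℝ => -a * z^2) atTop atBot := by
        apply Tendsto.const_mul_atTop_of_neg (neg_neg_iff_pos.mpr ha)
        exact tendsto_pow_atTop (by norm_num)
      have := (Real.tendsto_exp_atBot.comp h1).const_mul (1/(2*a) * Real.sqrt (2*π))
      simpa using this
  have hint1 := (integrable_psi_moment ha c).integrableOn (s := Ioi (0:ℝ))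
  have hint2 : IntegrableOn (fun z : ℝ => (c/(2*a)) * Real.exp (-(a + c^2/2) * z^2))
      (Ioi (0:ℝ)) :=
    ((integrable_exp_neg_mul_sq (by positivity)).const_mul _).integrableOn
  have key := integral_Ioi_of_hasDerivAt_of_tendsto' (a := 0) (fun y _ => hd y)
    (hint1.add hint2) hlim
  rw [integral_add hint1 hint2] at key
  have h2 : ∫ z in Ioi (0:ℝ), (c/(2*a)) * Real.exp (-(a + c^2/2) * z^2)
      = (c/(2*a)) * (Real.sqrt (π/(a + c^2/2)) / 2) := by
    rw [MeasureTheory.integral_const_mul, integral_gaussian_Ioi]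
  have hF0 : F 0 = -(1/(2*a)) * gaussK := by
    rw [hF]; simp [Psi_zero, gaussK_eq]
  rw [h2, hF0] at key
  have : (∫ z in Ioi (0:ℝ), z * Real.exp (-a * z^2) * Psi (c * z))
      = 0 - -(1/(2*a)) * gaussK - (c/(2*a)) * (Real.sqrt (π/(a + c^2/2)) / 2) := by
    linarith
  rw [this]; field_simp
  ring
end lemmaL

lemma inner_integral (σy σz ξ : ℝ) (hσy : 0 < σy) (hσz : 0 < σz) (hξ : |ξ| < 1)
    {z : ℝ} (hz : 0 < z) :
    ∫ y in Ioi (0:ℝ), 2 * |y - z| * bvnDensity σy σz ξ y z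
      = (1 / (2 * π * Real.sqrt (1 - ξ ^ 2) * σy * σz)) * Real.exp (-(z^2)/(2*σz^2)) *
        (4*(σy*Real.sqrt (1-ξ^2))^2
            * Real.exp (-((z - ξ*σy*z/σz)^2)/(2*(σy*Real.sqrt (1-ξ^2))^2))
          - 2*(σy*Real.sqrt (1-ξ^2))^2
            * Real.exp (-((0 - ξ*σy*z/σz)^2)/(2*(σy*Real.sqrt (1-ξ^2))^2))
          + 2*(σy*Real.sqrt (1-ξ^2))*(ξ*σy*z/σz - z)*
            (2*Psi ((z - ξ*σy*z/σz)/(σy*Real.sqrt (1-ξ^2)))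
              - Psi ((0 - ξ*σy*z/σz)/(σy*Real.sqrt (1-ξ^2))))) := by
  have hξ2 : 0 < 1 - ξ^2 := by
    have := abs_lt.1 hξ
    nlinarith [this.1, this.2]
  set τ : ℝ := σy * Real.sqrt (1 - ξ^2) with hτdef
  set m : ℝ := ξ*σy*z/σz with hmdef
  have hτ : 0 < τ := mul_pos hσy (Real.sqrt_pos.2 hξ2)
  have hτ2 : τ^2 = σy^2 * (1 - ξ^2) := by
    rw [hτdef, mul_pow, Real.sq_sqrt hξ2.le]
  set D : ℝ := 1 / (2 * π * Real.sqrt (1 - ξ ^ 2) * σy * σz) with hDdef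
  set E : ℝ → ℝ := fun y => Real.exp (-((y - m)^2) / (2*τ^2)) with hEdef
  have claim1 : ∀ y : ℝ, bvnDensity σy σz ξ y z
      = D * (Real.exp (-(z^2)/(2*σz^2)) * E y) := by
    intro y
    rw [bvnDensity, hEdef, ← Real.exp_add, ← hDdef]
    congr 1
    rw [hmdef]
    have h1 : (1:ℝ) - ξ^2 ≠ 0 := hξ2.ne'
    rw [hτ2]
    field_simp
    ring
  have hEcont : Continuous E := by
    rw [hEdef]; continuity
  have hIntG : Integrable (fun y : ℝ => 2 * |y - z| * E y) := by
    have hg : Integrable (fun y : ℝ =>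
        2 * (|(y - m) * Real.exp (-((y - m)^2) / (2*τ^2))| + |m - z| * E y)) := by
      refine (((integrable_moment_gK_affine hτ).abs.add
        ((integrable_gK_affine hτ).const_mul |m - z|)).const_mul 2)
    refine hg.mono' ?_ (Eventually.of_forall fun y => ?_)
    · exact ((continuous_const.mul ((continuous_id.sub continuous_const).abs)).mul
        hEcont).aestronglyMeasurable
    · have hE0 : 0 ≤ E y := (Real.exp_pos _).le
      have hnorm : ‖2 * |y - z| * E y‖ = 2 * |y - z| * E y := by
        rw [Real.norm_eq_abs, abs_of_nonneg (by positivity)]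
      rw [hnorm]
      have h2 : |(y - m) * Real.exp (-((y - m)^2) / (2*τ^2))| = |y - m| * E y := by
        rw [abs_mul, abs_of_nonneg ((Real.exp_pos _).le)]
      rw [h2]
      have htri : |y - z| ≤ |y - m| + |m - z| := by
        have := abs_sub_le y m z; linarith
      have hmul : |y - z| * E y ≤ (|y - m| + |m - z|) * E y :=
        mul_le_mul_of_nonneg_right htri hE0
      calc 2 * |y - z| * E y = 2 * (|y - z| * E y) := by ring
        _ ≤ 2 * ((|y - m| + |m - z|) * E y) := by linarith
        _ = 2 * (|y - m| * E y + |m - z| * E y) := by ring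
  have hsplit : ∫ y in Ioi (0:ℝ), 2 * |y - z| * E y
      = (∫ y in Ioc (0:ℝ) z, 2 * |y - z| * E y) + ∫ y in Ioi z, 2 * |y - z| * E y := by
    rw [← setIntegral_union (Ioc_disjoint_Ioi le_rfl) measurableSet_Ioi
      hIntG.integrableOn hIntG.integrableOn, Ioc_union_Ioi_eq_Ioi hz.le]
  have hIoc : ∫ y in Ioc (0:ℝ) z, 2 * |y - z| * E y
      = 2*(z - m)*(τ * Psi ((0 - m)/τ) - τ * Psi ((z - m)/τ))
        + 2*(τ^2 * Real.exp (-((z - m)^2) / (2*τ^2)) - τ^2 * Real.exp (-((0 - m)^2) / (2*τ^2))) := by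
    have h1 : ∫ y in Ioc (0:ℝ) z, 2 * |y - z| * E y
        = ∫ y in Ioc (0:ℝ) z, (2*(z - m) * E y + 2*((m - y) * E y)) := by
      refine setIntegral_congr_fun measurableSet_Ioc fun y hy => ?_
      rw [abs_of_nonpos (sub_nonpos.2 hy.2)]
      ring
    have hfi : IntervalIntegrable (fun y : ℝ => 2*(z - m) * E y) volume 0 z :=
      ((integrable_gK_affine (m := m) hτ).const_mul _).intervalIntegrable
    have hgi0 : Integrable (fun y : ℝ => (m - y) * E y) := by
      refine (integrable_moment_gK_affine (m := m) hτ).neg.congr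
        (Eventually.of_forall fun y => ?_)
      simp only [Pi.neg_apply, hEdef]
      ring
    have hgi : IntervalIntegrable (fun y : ℝ => 2*((m - y) * E y)) volume 0 z :=
      (hgi0.const_mul 2).intervalIntegrable
    rw [h1, ← intervalIntegral.integral_of_le hz.le,
      intervalIntegral.integral_add hfi hgi, intervalIntegral.integral_const_mul,
      intervalIntegral.integral_const_mul]
    rw [hEdef]
    rw [integral_interval_gauss hτ, integral_interval_gauss_moment hτ]
  have hIoi : ∫ y in Ioi z, 2 * |y - z| * E y
      = 2*(τ^2 * Real.exp (-((z - m)^2) / (2*τ^2))) + 2*(m - z)*(τ * Psi ((z - m)/τ)) := by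
    have h1 : ∫ y in Ioi z, 2 * |y - z| * E y
        = ∫ y in Ioi z, (2*((y - m) * E y) + 2*(m - z) * E y) := by
      refine setIntegral_congr_fun measurableSet_Ioi fun y hy => ?_
      rw [abs_of_nonneg (sub_nonneg.2 (le_of_lt hy))]
      ring
    have hfi : IntegrableOn (fun y : ℝ => 2*((y - m) * E y)) (Ioi z) := by
      refine (((integrable_moment_gK_affine (m := m) hτ)).const_mul 2).integrableOn
    have hgi : IntegrableOn (fun y : ℝ => 2*(m - z) * E y) (Ioi z) :=
      ((integrable_gK_affine (m := m) hτ).const_mul _).integrableOn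
    rw [h1, integral_add hfi hgi, MeasureTheory.integral_const_mul,
      MeasureTheory.integral_const_mul]
    rw [hEdef]
    rw [integral_Ioi_gauss_tail hτ, integral_Ioi_gauss_moment hτ]
  have step : ∫ y in Ioi (0:ℝ), 2 * |y - z| * bvnDensity σy σz ξ y z
      = (D * Real.exp (-(z^2)/(2*σz^2))) * ∫ y in Ioi (0:ℝ), 2 * |y - z| * E y := by
    rw [← integral_const_mul]
    refine setIntegral_congr_fun measurableSet_Ioi fun y _ => ?_
    rw [claim1 y]; ring
  rw [step, hsplit, hIoc, hIoi]
  ring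

set_option maxHeartbeats 2000000 in
theorem stmt9 (σy σz ξ : ℝ) (hσy : 0 < σy) (hσz : 0 < σz) (hξ : |ξ| < 1) :
    (∫ z in Set.Ioi (0 : ℝ), ∫ y in Set.Ioi (0 : ℝ), 2 * |y - z| * bvnDensity σy σz ξ y z) =
      (1 / Real.sqrt (2 * π)) *
        (-(1 - ξ) * (σy + σz) + 2 * Real.sqrt (σy ^ 2 - 2 * ξ * σy * σz + σz ^ 2)) := by
  have hξ1 := abs_lt.1 hξ
  have hξ2 : 0 < 1 - ξ^2 := by nlinarith [hξ1.1, hξ1.2]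
  have hW : 0 < Real.sqrt (1-ξ^2) := Real.sqrt_pos.2 hξ2
  have hW2 : Real.sqrt (1-ξ^2)^2 = 1-ξ^2 := Real.sq_sqrt hξ2.le
  have hA : 0 < σy^2 - 2*ξ*σy*σz + σz^2 := by
    nlinarith [hξ1.1, hξ1.2, mul_pos hσy hσz, sq_nonneg (σy-σz), sq_nonneg (σy+σz)]
  have hs : 0 < Real.sqrt (σy^2 - 2*ξ*σy*σz + σz^2) := Real.sqrt_pos.2 hA
  have hs2 : (Real.sqrt (σy^2-2*ξ*σy*σz+σz^2))^2 = σy^2-2*ξ*σy*σz+σz^2 := Real.sq_sqrt hA.le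
  have hS : 0 < Real.sqrt (2*π) := Real.sqrt_pos.2 (by positivity)
  have hS2 : (Real.sqrt (2*π))^2 = 2*π := Real.sq_sqrt (by positivity)
  have hτ : 0 < σy * Real.sqrt (1-ξ^2) := mul_pos hσy hW
  set W := Real.sqrt (1-ξ^2) with hWdef
  set a : ℝ := 1/(2*σz^2) with ha_def
  have ha : 0 < a := by rw [ha_def]; positivity
  set c1 : ℝ := (σz - ξ*σy)/(σz*(σy*W)) with hc1_def
  set c2 : ℝ := -(ξ*σy)/(σz*(σy*W)) with hc2_def
  set A1 : ℝ := 4*(σy*W)^2 * (1/(2*π*W*σy*σz)) with hA1_def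
  set A2 : ℝ := 2*(σy*W)^2 * (1/(2*π*W*σy*σz)) with hA2_def
  set A3 : ℝ := 4*(σy*W)*(ξ*σy/σz - 1) * (1/(2*π*W*σy*σz)) with hA3_def
  set A4 : ℝ := 2*(σy*W)*(ξ*σy/σz - 1) * (1/(2*π*W*σy*σz)) with hA4_def
  have hcong : ∀ z ∈ Ioi (0:ℝ),
      (∫ y in Ioi (0:ℝ), 2 * |y - z| * bvnDensity σy σz ξ y z)
      = A1 * Real.exp (-(a+c1^2/2) * z^2) - A2 * Real.exp (-(a+c2^2/2) * z^2)
        + A3 * (z * Real.exp (-a*z^2) * Psi (c1*z)) - A4 * (z * Real.exp (-a*z^2) * Psi (c2*z)) := by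
    intro z hz
    rw [inner_integral σy σz ξ hσy hσz hξ hz]
    have hp1 : (z - ξ*σy*z/σz)/(σy*W) = c1*z := by
      rw [hc1_def]; field_simp
    have hp2 : ((0:ℝ) - ξ*σy*z/σz)/(σy*W) = c2*z := by
      rw [hc2_def]; field_simp; ring
    have he1 : Real.exp (-(z^2)/(2*σz^2)) * Real.exp (-((z - ξ*σy*z/σz)^2)/(2*(σy*W)^2))
        = Real.exp (-(a+c1^2/2) * z^2) := by
      rw [← Real.exp_add]; congr 1
      rw [ha_def, hc1_def]
      field_simp
      ring
    have he2 : Real.exp (-(z^2)/(2*σz^2)) * Real.exp (-(((0:ℝ) - ξ*σy*z/σz)^2)/(2*(σy*W)^2))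
        = Real.exp (-(a+c2^2/2) * z^2) := by
      rw [← Real.exp_add]; congr 1
      rw [ha_def, hc2_def]
      field_simp
      ring
    have he3 : Real.exp (-a*z^2) = Real.exp (-(z^2)/(2*σz^2)) := by
      congr 1; rw [ha_def]; field_simp
    rw [hp1, hp2, ← he1, ← he2, he3]
    ring
  rw [setIntegral_congr_fun measurableSet_Ioi hcong]
  have hb1 : 0 < a + c1^2/2 := by positivity
  have hb2 : 0 < a + c2^2/2 := by positivity
  have int1 : IntegrableOn (fun z : ℝ => A1 * Real.exp (-(a+c1^2/2) * z^2)) (Ioi 0) :=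
    ((integrable_exp_neg_mul_sq hb1).const_mul _).integrableOn
  have int2 : IntegrableOn (fun z : ℝ => A2 * Real.exp (-(a+c2^2/2) * z^2)) (Ioi 0) :=
    ((integrable_exp_neg_mul_sq hb2).const_mul _).integrableOn
  have int3 : IntegrableOn (fun z : ℝ => A3 * (z * Real.exp (-a*z^2) * Psi (c1*z))) (Ioi 0) :=
    ((integrable_psi_moment ha c1).const_mul _).integrableOn
  have int4 : IntegrableOn (fun z : ℝ => A4 * (z * Real.exp (-a*z^2) * Psi (c2*z))) (Ioi 0) :=
    ((integrable_psi_moment ha c2).const_mul _).integrableOn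
  set f1 : ℝ → ℝ := fun x => A1 * Real.exp (-(a+c1^2/2) * x^2) with hf1
  set f2 : ℝ → ℝ := fun x => A2 * Real.exp (-(a+c2^2/2) * x^2) with hf2
  set f3 : ℝ → ℝ := fun x => A3 * (x * Real.exp (-a*x^2) * Psi (c1*x)) with hf3
  set f4 : ℝ → ℝ := fun x => A4 * (x * Real.exp (-a*x^2) * Psi (c2*x)) with hf4
  have int12 : IntegrableOn (fun x : ℝ => f1 x - f2 x) (Ioi 0) := int1.sub int2
  have int123 : IntegrableOn (fun x : ℝ => f1 x - f2 x + f3 x) (Ioi 0) := int12.add int3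
  have s1 : (∫ x in Ioi (0:ℝ), (f1 x - f2 x)) = (∫ x in Ioi (0:ℝ), f1 x) - ∫ x in Ioi (0:ℝ), f2 x :=
    integral_sub int1 int2
  have s2 : (∫ x in Ioi (0:ℝ), (f1 x - f2 x + f3 x))
      = (∫ x in Ioi (0:ℝ), (f1 x - f2 x)) + ∫ x in Ioi (0:ℝ), f3 x := integral_add int12 int3
  have s3 : (∫ x in Ioi (0:ℝ), (f1 x - f2 x + f3 x - f4 x))
      = (∫ x in Ioi (0:ℝ), (f1 x - f2 x + f3 x)) - ∫ x in Ioi (0:ℝ), f4 x :=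
    integral_sub int123 int4
  have split : (∫ x in Ioi (0:ℝ), (f1 x - f2 x + f3 x - f4 x))
      = (∫ x in Ioi (0:ℝ), f1 x) - (∫ x in Ioi (0:ℝ), f2 x)
        + (∫ x in Ioi (0:ℝ), f3 x) - ∫ x in Ioi (0:ℝ), f4 x := by
    rw [s3, s2, s1]
  rw [hf1, hf2, hf3, hf4] at split
  rw [split, MeasureTheory.integral_const_mul, MeasureTheory.integral_const_mul,
    MeasureTheory.integral_const_mul, MeasureTheory.integral_const_mul,
    integral_gaussian_Ioi, integral_gaussian_Ioi,
    integral_psi_moment ha c1, integral_psi_moment ha c2, gaussK_eq]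
  have hmp : (σy*W)^2 = σy^2*(1-ξ^2) := by rw [mul_pow, hW2]
  have harg1 : π / (a + c1^2/2)
      = (Real.sqrt (2*π) * (σz*(σy*W)) / Real.sqrt (σy^2-2*ξ*σy*σz+σz^2))^2 := by
    rw [ha_def, hc1_def]
    simp only [div_pow, mul_pow]
    rw [hS2, hs2, hW2]
    field_simp
    rw [eq_div_iff (by intro h; apply hA.ne'; linear_combination h)]
    ring
  have hQ1 : Real.sqrt (π / (a + c1^2/2))
      = Real.sqrt (2*π) * (σz*(σy*W)) / Real.sqrt (σy^2-2*ξ*σy*σz+σz^2) := by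
    rw [harg1, Real.sqrt_sq (by positivity)]
  have harg2 : π / (a + c2^2/2) = (Real.sqrt (2*π) * (σz*W))^2 := by
    rw [ha_def, hc2_def]
    simp only [div_pow, mul_pow, neg_sq]
    rw [hS2, hW2]
    field_simp
    ring
  have hQ2 : Real.sqrt (π / (a + c2^2/2)) = Real.sqrt (2*π) * (σz*W) := by
    rw [harg2, Real.sqrt_sq (by positivity)]
  rw [hQ1, hQ2]
  set S := Real.sqrt (2*π) with hSdef
  set sA := Real.sqrt (σy^2-2*ξ*σy*σz+σz^2) with hsAdef
  have hπ : π = S^2/2 := by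
    rw [hSdef, hS2]; ring
  rw [hA1_def, hA2_def, hA3_def, hA4_def, hc1_def, hc2_def, ha_def, hmp, hπ]
  have hSne : S ≠ 0 := hS.ne'
  have hsAne : sA ≠ 0 := hs.ne'
  have hWne : W ≠ 0 := hW.ne'
  trans ((2*(σy^2*(1-ξ^2)) + 2*(ξ*σy - σz)^2)/(S*sA)
    + (-σy*(1-ξ^2) + (ξ*σy - σz)*(1-ξ))/S)
  · field_simp
    ring
  · have e : 2*(σy^2*(1-ξ^2)) + 2*(ξ*σy - σz)^2 = 2*sA^2 := by rw [hs2]; ring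
    rw [e]
    field_simp
    ring
end

section
/- If (Y, Z) is centered bivariate normal with standard deviations σ_y, σ_z > 0 and correlation ξ with |ξ| < 1, and f denotes its density, then ∫₀^∞ ∫_{-∞}^0 2z f(y,z) dy dz = (1-ξ)σ_z/√(2π), where the inner integral is over y ∈ (-∞, 0) and the outer over z ∈ (0, ∞). -/
open Real

open MeasureTheory Set Filter Topology

noncomputable def gs (x : ℝ) : ℝ := Real.exp (-(1/2) * x ^ 2)

lemma gs_cont : Continuous gs := by unfold gs; fun_prop

lemma gs_pos (x : ℝ) : 0 < gs x := Real.exp_pos _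

lemma integrable_gs : Integrable gs := integrable_exp_neg_mul_sq (by norm_num)

lemma integral_gs : ∫ x, gs x = Real.sqrt (2*π) := by
  have h := integral_gaussian (1/2)
  rw [show π / (1/2 : ℝ) = 2*π by ring] at h
  exact h

noncomputable def Gt (t : ℝ) : ℝ := ∫ u in Set.Ioi t, gs u

lemma Gt_zero : Gt 0 = Real.sqrt (2*π) / 2 := by
  have h := integral_gaussian_Ioi (1/2)
  rw [show π / (1/2 : ℝ) = 2*π by ring] at h
  exact h

lemma Gt_nonneg (t : ℝ) : 0 ≤ Gt t :=
  setIntegral_nonneg measurableSet_Ioi fun x _ => (gs_pos x).le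

lemma Gt_le (t : ℝ) : Gt t ≤ Real.sqrt (2*π) := by
  rw [← integral_gs]
  exact setIntegral_le_integral integrable_gs (Eventually.of_forall fun x => (gs_pos x).le)

lemma Gt_eq (t : ℝ) : Gt t = Gt 0 - ∫ u in (0:ℝ)..t, gs u := by
  have h1 : ((∫ u in Iic t, gs u) - ∫ u in Iic 0, gs u) = ∫ u in (0:ℝ)..t, gs u :=
    intervalIntegral.integral_Iic_sub_Iic integrable_gs.integrableOn integrable_gs.integrableOn
  have h2 : (∫ u in Iic t, gs u) + Gt t = ∫ u, gs u :=
    intervalIntegral.integral_Iic_add_Ioi integrable_gs.integrableOn integrable_gs.integrableOn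
  have h3 : (∫ u in Iic 0, gs u) + Gt 0 = ∫ u, gs u :=
    intervalIntegral.integral_Iic_add_Ioi integrable_gs.integrableOn integrable_gs.integrableOn
  linarith

lemma Gt_hasDeriv (t : ℝ) : HasDerivAt Gt (-(gs t)) t := by
  have hd : HasDerivAt (fun s => ∫ u in (0:ℝ)..s, gs u) (gs t) t :=
    intervalIntegral.integral_hasDerivAt_right integrable_gs.intervalIntegrable
      (gs_cont.stronglyMeasurableAtFilter _ _) gs_cont.continuousAt
  have : Gt = fun s => Gt 0 - ∫ u in (0:ℝ)..s, gs u := funext Gt_eq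
  rw [this]
  simpa using hd.const_sub (Gt 0)

lemma Gt_cont : Continuous Gt :=
  continuous_iff_continuousAt.2 fun t => (Gt_hasDeriv t).continuousAt

lemma integral_Ioi_comp_add_right (f : ℝ → ℝ) (t a : ℝ) :
    ∫ x in Ioi a, f (x + t) = ∫ x in Ioi (a + t), f x := by
  have A : MeasurableEmbedding fun x : ℝ => x + t :=
    (Homeomorph.addRight t).isClosedEmbedding.measurableEmbedding
  have h := A.setIntegral_map (μ := volume) f (Ioi (a + t))
  rw [map_add_right_eq_self (volume : Measure ℝ) t] at h
  rw [h]
  congr 1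
  rw [preimage_add_const_Ioi]
  congr 1
  ring_nf

lemma inner_eq (σy aa m : ℝ) (hσy : 0 < σy) (ha : 0 < aa) :
    ∫ y in Iio (0:ℝ), Real.exp (-(1/2) * ((y/σy - m)/aa)^2) = σy * aa * Gt (m/aa) := by
  have hne : σy * aa ≠ 0 := by positivity
  rw [← integral_Iic_eq_integral_Iio]
  have s1 : ∀ y : ℝ, Real.exp (-(1/2) * ((y/σy - m)/aa)^2)
      = (fun x => Real.exp (-(1/2) * ((x/σy + m)/aa)^2)) (-y) := by
    intro y; simp only; congr 1; ring
  rw [setIntegral_congr_fun measurableSet_Iic (fun y _ => s1 y)]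
  rw [integral_comp_neg_Iic 0 (fun x => Real.exp (-(1/2) * ((x/σy + m)/aa)^2)), neg_zero]
  have s2 : ∀ x : ℝ, Real.exp (-(1/2) * ((x/σy + m)/aa)^2)
      = (fun u => gs (u + m/aa)) ((σy*aa)⁻¹ * x) := by
    intro x; simp only [gs]; congr 1; field_simp
  rw [setIntegral_congr_fun measurableSet_Ioi (fun x _ => s2 x)]
  rw [integral_comp_mul_left_Ioi (fun u => gs (u + m/aa)) 0 (by positivity : (0:ℝ) < (σy*aa)⁻¹)]
  rw [mul_zero, inv_inv, smul_eq_mul, integral_Ioi_comp_add_right gs (m/aa) 0, zero_add]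
  rfl

lemma gs_mul_gs (c v : ℝ) : gs v * gs (c*v) = Real.exp (-((1+c^2)/2) * v^2) := by
  unfold gs; rw [← Real.exp_add]; congr 1; ring

lemma parts (c : ℝ) : ∫ v in Ioi (0:ℝ), v * gs v * Gt (c*v)
    = Real.sqrt (2*π)/2 - c * (Real.sqrt (π/((1+c^2)/2))/2) := by
  set F : ℝ → ℝ := fun v => -(gs v * Gt (c*v)) with hF
  have hcv : ∀ v : ℝ, HasDerivAt (fun v => Gt (c*v)) (-(gs (c*v)) * c) v := by
    intro v
    exact (Gt_hasDeriv (c*v)).comp v (by simpa using (hasDerivAt_id v).const_mul c)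
  have hgs : ∀ v : ℝ, HasDerivAt gs (-v * gs v) v := by
    intro v
    have h0 : HasDerivAt (fun x : ℝ => -(1/2) * x^2) (-v) v := by
      have := (hasDerivAt_pow 2 v).const_mul (-(1/2) : ℝ)
      refine this.congr_deriv ?_
      norm_num
      ring
    have := h0.exp
    convert this using 1
    rfl
    unfold gs; ring
  have hFd : ∀ v : ℝ, HasDerivAt F (v * gs v * Gt (c*v) + c * (gs v * gs (c*v))) v := by
    intro v
    have := ((hgs v).mul (hcv v)).neg
    refine this.congr_deriv ?_
    ring
  have hcont1 : Continuous fun v : ℝ => v * gs v * Gt (c*v) :=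
    ((continuous_id.mul gs_cont).mul (Gt_cont.comp (continuous_const.mul continuous_id)))
  have h1int : IntegrableOn (fun v => v * gs v * Gt (c*v)) (Ioi (0:ℝ)) := by
    refine Integrable.mono'
      (((integrable_mul_exp_neg_mul_sq (one_half_pos)).integrableOn).const_mul (Real.sqrt (2*π)))
      hcont1.aestronglyMeasurable ?_
    rw [ae_restrict_iff' measurableSet_Ioi]
    filter_upwards with v hv
    have hv0 : 0 < v := hv
    have h1 : ‖v * gs v * Gt (c*v)‖ = v * gs v * Gt (c*v) := by
      rw [Real.norm_eq_abs, abs_of_nonneg]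
      have := gs_pos v; have := Gt_nonneg (c*v); positivity
    rw [h1]
    have hb : v * gs v * Gt (c*v) ≤ v * gs v * Real.sqrt (2*π) := by
      apply mul_le_mul_of_nonneg_left (Gt_le _)
      have := gs_pos v; positivity
    calc v * gs v * Gt (c*v) ≤ v * gs v * Real.sqrt (2*π) := hb
      _ = Real.sqrt (2*π) * (v * Real.exp (-(1/2) * v^2)) := by unfold gs; ring
  have h2int : IntegrableOn (fun v => c * (gs v * gs (c*v))) (Ioi (0:ℝ)) := by
    have hfun : (fun v => c * (gs v * gs (c*v)))
        = fun v => c * Real.exp (-((1+c^2)/2) * v^2) := funext fun v => by rw [gs_mul_gs]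
    rw [hfun]
    exact ((integrable_exp_neg_mul_sq (by positivity)).const_mul c).integrableOn
  have hlim : Tendsto F atTop (𝓝 0) := by
    have hg0 : Tendsto (fun v => Real.sqrt (2*π) * gs v) atTop (𝓝 0) := by
      rw [show (0:ℝ) = Real.sqrt (2*π) * 0 by ring]
      apply Tendsto.const_mul
      unfold gs
      apply Real.tendsto_exp_atBot.comp
      have hsq : Tendsto (fun v : ℝ => v^2) atTop atTop := tendsto_pow_atTop two_ne_zero
      have h2 : Tendsto (fun v : ℝ => (1/2) * v^2) atTop atTop :=
        hsq.const_mul_atTop (show (0:ℝ) < 1/2 by norm_num)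
      have h3 := tendsto_neg_atTop_atBot.comp h2
      apply h3.congr
      intro v; simp only [Function.comp]; ring
    refine squeeze_zero_norm (fun v => ?_) hg0
    simp only [hF, norm_neg, Real.norm_eq_abs]
    rw [abs_of_nonneg (by have := gs_pos v; have := Gt_nonneg (c*v); positivity)]
    calc gs v * Gt (c*v) ≤ gs v * Real.sqrt (2*π) :=
          mul_le_mul_of_nonneg_left (Gt_le _) (gs_pos v).le
      _ = Real.sqrt (2*π) * gs v := by ring
  have key := integral_Ioi_of_hasDerivAt_of_tendsto' (fun x _ => hFd x) (h1int.add h2int) hlim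
  rw [integral_add h1int h2int] at key
  have hF0 : F 0 = -(Real.sqrt (2*π)/2) := by
    rw [hF]; simp only [mul_zero]
    rw [Gt_zero]
    unfold gs; norm_num
  have hgauss : ∫ v in Ioi (0:ℝ), c * (gs v * gs (c*v))
      = c * (Real.sqrt (π/((1+c^2)/2))/2) := by
    have hfun : (fun v => c * (gs v * gs (c*v)))
        = fun v => c * Real.exp (-((1+c^2)/2) * v^2) := funext fun v => by rw [gs_mul_gs]
    rw [hfun, MeasureTheory.integral_const_mul, integral_gaussian_Ioi]
  rw [hgauss, hF0] at key
  linarith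

theorem stmt10 (σy σz ξ : ℝ) (hσy : 0 < σy) (hσz : 0 < σz) (hξ : |ξ| < 1) :
    (∫ z in Set.Ioi (0 : ℝ), ∫ y in Set.Iio (0 : ℝ), 2 * z * bvnDensity σy σz ξ y z) =
      (1 - ξ) * σz / Real.sqrt (2 * π) := by
  have hπ : 0 < π := pi_pos
  have h1mξ : 0 < 1 - ξ^2 := by
    have h1 := abs_lt.1 hξ
    nlinarith
  set a := Real.sqrt (1 - ξ^2) with ha'
  have ha : 0 < a := Real.sqrt_pos.2 h1mξ
  have ha2 : a^2 = 1 - ξ^2 := Real.sq_sqrt h1mξ.le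
  set c := ξ / a with hc
  have hca : c * a = ξ := by rw [hc, div_mul_cancel₀ ξ ha.ne']
  have hinner : ∀ z : ℝ, (∫ y in Set.Iio (0:ℝ), 2*z*bvnDensity σy σz ξ y z)
      = (1/π) * ((z/σz) * gs (z/σz) * Gt (c*(z/σz))) := by
    intro z
    have hpt : ∀ y : ℝ, 2*z*bvnDensity σy σz ξ y z
        = (2*z*(1/(2*π*a*σy*σz)) * gs (z/σz)) * Real.exp (-(1/2) * ((y/σy - ξ*z/σz)/a)^2) := by
      intro y
      unfold bvnDensity
      rw [← ha']
      have hexp : (-(1 / (2 * (1 - ξ ^ 2))) *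
            (y ^ 2 / σy ^ 2 - 2 * ξ * y * z / (σy * σz) + z ^ 2 / σz ^ 2))
          = -(1/2) * (z/σz)^2 + (-(1/2) * ((y/σy - ξ*z/σz)/a)^2) := by
        have hq : ((y/σy - ξ*z/σz)/a)^2 = (y/σy - ξ*z/σz)^2 / (1-ξ^2) := by
          rw [div_pow, ha2]
        rw [hq]
        field_simp
        ring
      rw [hexp, Real.exp_add]
      unfold gs
      ring
    rw [setIntegral_congr_fun measurableSet_Iio (fun y _ => hpt y),
      MeasureTheory.integral_const_mul, inner_eq σy a (ξ*z/σz) hσy ha,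
      show (ξ*z/σz)/a = c*(z/σz) by rw [hc]; ring]
    field_simp
  rw [setIntegral_congr_fun measurableSet_Ioi (fun z _ => hinner z)]
  have hout : ∀ z : ℝ, (1/π) * ((z/σz) * gs (z/σz) * Gt (c*(z/σz)))
      = (fun v => (1/π) * (v * gs v * Gt (c*v))) (σz⁻¹ * z) := by
    intro z
    simp only
    rw [show σz⁻¹ * z = z/σz by ring]
  rw [setIntegral_congr_fun measurableSet_Ioi (fun z _ => hout z),
    integral_comp_mul_left_Ioi (fun v => (1/π) * (v * gs v * Gt (c*v))) 0
      (by positivity : (0:ℝ) < σz⁻¹),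
    mul_zero, inv_inv, smul_eq_mul, MeasureTheory.integral_const_mul, parts c]
  -- arithmetic
  have hc2 : 1 + c^2 = 1/a^2 := by
    rw [hc]
    field_simp
    linarith [ha2]
  have h4 : π/((1+c^2)/2) = 2*π*a^2 := by
    rw [hc2]
    field_simp
  have h5 : Real.sqrt (2*π*a^2) = Real.sqrt (2*π) * a := by
    rw [Real.sqrt_mul (by positivity), Real.sqrt_sq ha.le]
  rw [h4, h5]
  have hs : Real.sqrt (2*π) * Real.sqrt (2*π) = 2*π := Real.mul_self_sqrt (by positivity)
  have hξa : c * (Real.sqrt (2*π) * a / 2) = ξ * Real.sqrt (2*π) / 2 := by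
    rw [show c * (Real.sqrt (2*π) * a / 2) = (c*a) * Real.sqrt (2*π) / 2 by ring, hca]
  rw [hξa, eq_div_iff (by positivity : Real.sqrt (2*π) ≠ 0)]
  have hs2 : Real.sqrt 2 * Real.sqrt π * (Real.sqrt 2 * Real.sqrt π) = 2*π := by
    rw [← Real.sqrt_mul (by norm_num : (0:ℝ) ≤ 2) π]; exact hs
  field_simp
  have hs3 : √(π*2)^2 = 2*π := by rw [Real.sq_sqrt (by positivity)]; ring
  linear_combination (1 - ξ) * hs3
end

section
/- If (Y, Z) is centered bivariate normal with standard deviations σ_y, σ_z > 0 and correlation ξ with |ξ| < 1, then E|(Y + |Y|) - (Z + |Z|)| = (2/√(2π))·√(σ_y² - 2ξσ_yσ_z + σ_z²) (obtained by summing the contributions over the four sign quadrants of (Y,Z)). -/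
open Real

open MeasureTheory Filter

lemma quadid (y z : ℝ) :
    |(y + |y|) - (z + |z|)| + |((-y) + |(-y)|) - ((-z) + |(-z)|)| = 2 * |y - z| := by
  rcases le_total 0 y with hy|hy <;> rcases le_total 0 z with hz|hz <;>
    rcases le_total z y with h|h <;>
    simp [abs_of_nonneg, abs_of_nonpos, *] <;>
    first
      | linarith
      | (rw [abs_eq (by linarith)]; first | (left; linarith) | (right; linarith))

lemma absint {b : ℝ} (hb : 0 < b) : ∫ t : ℝ, |t| * rexp (-b * t ^ 2) = 1 / b := by
  rw [show (fun t : ℝ => |t| * rexp (-b * t ^ 2)) = (fun t : ℝ => |t| * rexp (-b * |t| ^ 2)) by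
    funext t; rw [sq_abs]]
  rw [integral_comp_abs (f := fun x => x * rexp (-b * x ^ 2))]
  have hF : ∀ x ∈ Set.Ici (0:ℝ), HasDerivAt (fun x : ℝ => -(2*b)⁻¹ * rexp (-b * x ^ 2))
      (x * rexp (-b * x ^ 2)) x := by
    intro x _
    have h2 : HasDerivAt (fun x : ℝ => -b * x ^ 2) (-b * (2 * x)) x := by
      simpa using ((hasDerivAt_pow 2 x).const_mul (-b))
    have := (h2.exp).const_mul (-(2*b)⁻¹)
    refine this.congr_deriv ?_
    field_simp
  have htend : Tendsto (fun x : ℝ => -(2*b)⁻¹ * rexp (-b * x ^ 2)) atTop (nhds 0) := by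
    have h3 : Tendsto (fun x : ℝ => -b * x ^ 2) atTop atBot := by
      have := (tendsto_pow_atTop (two_ne_zero)).const_mul_atTop hb
      exact Filter.Tendsto.congr (fun x => by simp [Function.comp, neg_mul])
        (tendsto_neg_atTop_atBot.comp this)
    have := (Real.tendsto_exp_atBot.comp h3).const_mul (-(2*b)⁻¹)
    simpa using this
  have := integral_Ioi_of_hasDerivAt_of_tendsto' hF
    ((integrable_mul_exp_neg_mul_sq hb).integrableOn) htend
  rw [this]
  simp
  field_simp

lemma bvn_nonneg (σy σz ξ : ℝ) (hσy : 0 < σy) (hσz : 0 < σz) (hξ : |ξ| < 1) (y z : ℝ) :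
    0 ≤ bvnDensity σy σz ξ y z := by
  have hr : 0 < 1 - ξ ^ 2 := by nlinarith [abs_nonneg ξ, sq_abs ξ]
  unfold bvnDensity
  have : 0 < Real.sqrt (1 - ξ ^ 2) := Real.sqrt_pos.2 hr
  positivity

lemma bvn_le (σy σz ξ : ℝ) (hσy : 0 < σy) (hσz : 0 < σz) (hξ : |ξ| < 1) (y z : ℝ) :
    bvnDensity σy σz ξ y z ≤ (1 / (2 * π * Real.sqrt (1 - ξ ^ 2) * σy * σz)) *
      (rexp (-((1 - |ξ|) / (2 * (1 - ξ ^ 2) * (max σy σz) ^ 2)) * y ^ 2) *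
       rexp (-((1 - |ξ|) / (2 * (1 - ξ ^ 2) * (max σy σz) ^ 2)) * z ^ 2)) := by
  have hr : 0 < 1 - ξ ^ 2 := by nlinarith [abs_nonneg ξ, sq_abs ξ]
  have hm : 0 < max σy σz := lt_max_of_lt_left hσy
  have hK : 0 ≤ 1 / (2 * π * Real.sqrt (1 - ξ ^ 2) * σy * σz) := by
    have : 0 < Real.sqrt (1 - ξ ^ 2) := Real.sqrt_pos.2 hr
    positivity
  unfold bvnDensity
  apply mul_le_mul_of_nonneg_left _ hK
  rw [← Real.exp_add]
  apply Real.exp_le_exp.2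
  set c : ℝ := (1 - |ξ|) / (2 * (1 - ξ ^ 2) * (max σy σz) ^ 2) with hc
  have e1 : y ^ 2 / σy ^ 2 = (y / σy) ^ 2 := (div_pow y σy 2).symm
  have e2 : z ^ 2 / σz ^ 2 = (z / σz) ^ 2 := (div_pow z σz 2).symm
  have e3 : 2 * ξ * y * z / (σy * σz) = 2 * ξ * (y / σy) * (z / σz) := by
    field_simp
  rw [e1, e2, e3]
  set u : ℝ := y / σy with hu
  set v : ℝ := z / σz with hv
  have hy2 : y ^ 2 = u ^ 2 * σy ^ 2 := by
    rw [hu]; field_simp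
  have hz2 : z ^ 2 = v ^ 2 * σz ^ 2 := by
    rw [hv]; field_simp
  rw [hy2, hz2]
  have key : (1 - |ξ|) * (u ^ 2 + v ^ 2) ≤ u ^ 2 - 2 * ξ * u * v + v ^ 2 := by
    nlinarith [mul_nonneg (sub_nonneg.2 (le_abs_self ξ)) (sq_nonneg (u + v)),
      mul_nonneg (sub_nonneg.2 (neg_abs_le ξ)) (sq_nonneg (u - v)),
      sq_nonneg (u - v), sq_nonneg (u + v)]
  have key2 := mul_le_mul_of_nonneg_left key
    (by positivity : (0:ℝ) ≤ 1 / (2 * (1 - ξ ^ 2)))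
  have hcy : c * σy ^ 2 ≤ (1 - |ξ|) / (2 * (1 - ξ ^ 2)) := by
    rw [hc]
    rw [div_mul_eq_mul_div, div_le_div_iff₀ (by positivity) (by positivity)]
    have h1 : σy ^ 2 ≤ (max σy σz) ^ 2 :=
      pow_le_pow_left₀ hσy.le (le_max_left _ _) 2
    have h2 : 0 ≤ (1 - |ξ|) * (2 * (1 - ξ ^ 2)) :=
      mul_nonneg (by linarith) (by positivity)
    nlinarith [mul_le_mul_of_nonneg_left h1 h2]
  have hcz : c * σz ^ 2 ≤ (1 - |ξ|) / (2 * (1 - ξ ^ 2)) := by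
    rw [hc]
    rw [div_mul_eq_mul_div, div_le_div_iff₀ (by positivity) (by positivity)]
    have h1 : σz ^ 2 ≤ (max σy σz) ^ 2 :=
      pow_le_pow_left₀ hσz.le (le_max_right _ _) 2
    have h2 : 0 ≤ (1 - |ξ|) * (2 * (1 - ξ ^ 2)) :=
      mul_nonneg (by linarith) (by positivity)
    nlinarith [mul_le_mul_of_nonneg_left h1 h2]
  have A := mul_le_mul_of_nonneg_right hcy (sq_nonneg u)
  have B := mul_le_mul_of_nonneg_right hcz (sq_nonneg v)
  have goal2 : c * (u ^ 2 * σy ^ 2) + c * (v ^ 2 * σz ^ 2) ≤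
      1 / (2 * (1 - ξ ^ 2)) * (u ^ 2 - 2 * ξ * u * v + v ^ 2) := by
    calc c * (u ^ 2 * σy ^ 2) + c * (v ^ 2 * σz ^ 2)
        ≤ (1 - |ξ|) / (2 * (1 - ξ ^ 2)) * u ^ 2 +
          (1 - |ξ|) / (2 * (1 - ξ ^ 2)) * v ^ 2 := by
          have e4 : c * (u ^ 2 * σy ^ 2) = c * σy ^ 2 * u ^ 2 := by ring
          have e5 : c * (v ^ 2 * σz ^ 2) = c * σz ^ 2 * v ^ 2 := by ring
          rw [e4, e5]; exact add_le_add A B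
      _ = 1 / (2 * (1 - ξ ^ 2)) * ((1 - |ξ|) * (u ^ 2 + v ^ 2)) := by ring
      _ ≤ _ := key2
  linarith [goal2]

lemma bvn_continuous (σy σz ξ : ℝ) :
    Continuous fun p : ℝ × ℝ => bvnDensity σy σz ξ p.1 p.2 := by
  unfold bvnDensity
  fun_prop

lemma intmaster {a b K : ℝ} (ha : 0 < a) (hb : 0 < b) :
    Integrable (fun p : ℝ × ℝ =>
      K * ((|p.1| + |p.2| + 1) * (rexp (-a * p.1 ^ 2) * rexp (-b * p.2 ^ 2)))) := by
  apply Integrable.const_mul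
  have h1 : Integrable (fun x : ℝ => |x| * rexp (-a * x ^ 2)) := by
    apply (integrable_mul_exp_neg_mul_sq ha).abs.congr
    filter_upwards with x
    rw [abs_mul, abs_of_pos (exp_pos _)]
  have h2 : Integrable (fun x : ℝ => |x| * rexp (-b * x ^ 2)) := by
    apply (integrable_mul_exp_neg_mul_sq hb).abs.congr
    filter_upwards with x
    rw [abs_mul, abs_of_pos (exp_pos _)]
  have h3 := integrable_exp_neg_mul_sq ha
  have h4 := integrable_exp_neg_mul_sq hb
  have : (fun p : ℝ × ℝ => (|p.1| + |p.2| + 1) * (rexp (-a * p.1 ^ 2) * rexp (-b * p.2 ^ 2)))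
      = fun p : ℝ × ℝ => ((|p.1| * rexp (-a * p.1 ^ 2)) * rexp (-b * p.2 ^ 2)
        + rexp (-a * p.1 ^ 2) * (|p.2| * rexp (-b * p.2 ^ 2)))
        + rexp (-a * p.1 ^ 2) * rexp (-b * p.2 ^ 2) := by
    funext p; ring
  rw [this, MeasureTheory.Measure.volume_eq_prod]
  exact ((h1.mul_prod h4).add (h3.mul_prod h2)).add (h3.mul_prod h4)

lemma intdom {F : ℝ × ℝ → ℝ} (hFc : Continuous F) {a b K : ℝ} (ha : 0 < a) (hb : 0 < b)
    (hbd : ∀ p : ℝ × ℝ, |F p| ≤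
      K * ((|p.1| + |p.2| + 1) * (rexp (-a * p.1 ^ 2) * rexp (-b * p.2 ^ 2)))) :
    Integrable F := by
  exact (intmaster ha hb).mono' hFc.aestronglyMeasurable (Filter.Eventually.of_forall hbd)

lemma bvn_neg (σy σz ξ y z : ℝ) :
    bvnDensity σy σz ξ (-y) (-z) = bvnDensity σy σz ξ y z := by
  unfold bvnDensity
  congr 2
  ring

lemma complete_sq (σy σz ξ : ℝ) (hσy : 0 < σy) (hσz : 0 < σz) (hξ : |ξ| < 1) (t y : ℝ) :
    bvnDensity σy σz ξ y (y - t) =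
      ((1 / (2 * π * Real.sqrt (1 - ξ ^ 2) * σy * σz)) *
        rexp (-(1 / (2 * (σy ^ 2 - 2 * ξ * σy * σz + σz ^ 2))) * t ^ 2)) *
      rexp (-((σy ^ 2 - 2 * ξ * σy * σz + σz ^ 2) / (2 * (1 - ξ ^ 2) * σy ^ 2 * σz ^ 2)) *
          (y - σy * (σy - ξ * σz) / (σy ^ 2 - 2 * ξ * σy * σz + σz ^ 2) * t) ^ 2) := by
  have hr : 0 < 1 - ξ ^ 2 := by nlinarith [abs_nonneg ξ, sq_abs ξ]
  have hs2 : 0 < σy ^ 2 - 2 * ξ * σy * σz + σz ^ 2 := by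
    nlinarith [sq_nonneg (σy - ξ * σz), mul_pos hr (mul_pos hσz hσz)]
  unfold bvnDensity
  rw [show ∀ a b c : ℝ, a * rexp b * rexp c = a * rexp (b + c) from fun a b c => by
    rw [mul_assoc, ← Real.exp_add]]
  congr 1
  congr 1
  have hS0 := hs2.ne'
  generalize hS : σy ^ 2 - 2 * ξ * σy * σz + σz ^ 2 = S at hS0 ⊢
  field_simp
  subst hS
  ring

lemma const_eq (σy σz ξ : ℝ) (hσy : 0 < σy) (hσz : 0 < σz) (hξ : |ξ| < 1) :
    (1 / (2 * π * Real.sqrt (1 - ξ ^ 2) * σy * σz)) *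
      Real.sqrt (π / ((σy ^ 2 - 2 * ξ * σy * σz + σz ^ 2) / (2 * (1 - ξ ^ 2) * σy ^ 2 * σz ^ 2)))
    = 1 / (Real.sqrt (2 * π) * Real.sqrt (σy ^ 2 - 2 * ξ * σy * σz + σz ^ 2)) := by
  have hr : 0 < 1 - ξ ^ 2 := by nlinarith [abs_nonneg ξ, sq_abs ξ]
  have hs2 : 0 < σy ^ 2 - 2 * ξ * σy * σz + σz ^ 2 := by
    nlinarith [sq_nonneg (σy - ξ * σz), mul_pos hr (mul_pos hσz hσz)]
  have hπ : 0 < π := pi_pos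
  rw [show π / ((σy ^ 2 - 2 * ξ * σy * σz + σz ^ 2) / (2 * (1 - ξ ^ 2) * σy ^ 2 * σz ^ 2))
      = 2 * π * ((1 - ξ ^ 2) * (σy ^ 2 * σz ^ 2)) / (σy ^ 2 - 2 * ξ * σy * σz + σz ^ 2) from by
    field_simp]
  rw [Real.sqrt_div' _ ?hnum]
  case hnum => positivity
  rw [Real.sqrt_mul (by positivity : (0:ℝ) ≤ 2 * π), Real.sqrt_mul hr.le,
    Real.sqrt_mul (by positivity : (0:ℝ) ≤ σy ^ 2), Real.sqrt_sq hσy.le, Real.sqrt_sq hσz.le]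
  have h1 : 0 < Real.sqrt (1 - ξ ^ 2) := Real.sqrt_pos.2 hr
  have h2 : 0 < Real.sqrt (2 * π) := Real.sqrt_pos.2 (by positivity)
  have h3 : 0 < Real.sqrt (σy ^ 2 - 2 * ξ * σy * σz + σz ^ 2) := Real.sqrt_pos.2 hs2
  have h4 : Real.sqrt (2 * π) * Real.sqrt (2 * π) = 2 * π :=
    Real.mul_self_sqrt (by positivity)
  have h5 : Real.sqrt 2 ^ 2 = 2 := Real.sq_sqrt (by norm_num)
  have h6 : Real.sqrt π ^ 2 = π := Real.sq_sqrt hπ.le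
  have h7 : Real.sqrt (2 * π) ^ 2 = 2 * π := Real.sq_sqrt (by positivity)
  rw [div_mul_div_comm, div_eq_div_iff (by positivity) (by positivity)]
  linear_combination (Real.sqrt (1 - ξ ^ 2) * (σy * σz) * Real.sqrt (σy ^ 2 - 2 * ξ * σy * σz + σz ^ 2)) * h4

lemma inner_int (σy σz ξ : ℝ) (hσy : 0 < σy) (hσz : 0 < σz) (hξ : |ξ| < 1) (t : ℝ) :
    ∫ y : ℝ, bvnDensity σy σz ξ y (y - t)
      = (1 / (Real.sqrt (2 * π) * Real.sqrt (σy ^ 2 - 2 * ξ * σy * σz + σz ^ 2))) *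
        rexp (-(1 / (2 * (σy ^ 2 - 2 * ξ * σy * σz + σz ^ 2))) * t ^ 2) := by
  have hr : 0 < 1 - ξ ^ 2 := by nlinarith [abs_nonneg ξ, sq_abs ξ]
  have hs2 : 0 < σy ^ 2 - 2 * ξ * σy * σz + σz ^ 2 := by
    nlinarith [sq_nonneg (σy - ξ * σz), mul_pos hr (mul_pos hσz hσz)]
  have hd : 0 < (σy ^ 2 - 2 * ξ * σy * σz + σz ^ 2) / (2 * (1 - ξ ^ 2) * σy ^ 2 * σz ^ 2) := by
    positivity
  simp_rw [complete_sq σy σz ξ hσy hσz hξ t]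
  rw [integral_const_mul]
  rw [show (∫ y : ℝ, rexp (-((σy ^ 2 - 2 * ξ * σy * σz + σz ^ 2) /
        (2 * (1 - ξ ^ 2) * σy ^ 2 * σz ^ 2)) *
        (y - σy * (σy - ξ * σz) / (σy ^ 2 - 2 * ξ * σy * σz + σz ^ 2) * t) ^ 2))
      = ∫ y : ℝ, rexp (-((σy ^ 2 - 2 * ξ * σy * σz + σz ^ 2) /
        (2 * (1 - ξ ^ 2) * σy ^ 2 * σz ^ 2)) * y ^ 2) from
    integral_sub_right_eq_self (μ := volume) (fun y : ℝ => rexp (-((σy ^ 2 - 2 * ξ * σy * σz + σz ^ 2) /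
      (2 * (1 - ξ ^ 2) * σy ^ 2 * σz ^ 2)) * y ^ 2))
      (σy * (σy - ξ * σz) / (σy ^ 2 - 2 * ξ * σy * σz + σz ^ 2) * t)]
  rw [integral_gaussian]
  rw [show (1 / (2 * π * Real.sqrt (1 - ξ ^ 2) * σy * σz)) *
      rexp (-(1 / (2 * (σy ^ 2 - 2 * ξ * σy * σz + σz ^ 2))) * t ^ 2) *
      Real.sqrt (π / ((σy ^ 2 - 2 * ξ * σy * σz + σz ^ 2) / (2 * (1 - ξ ^ 2) * σy ^ 2 * σz ^ 2)))
      = ((1 / (2 * π * Real.sqrt (1 - ξ ^ 2) * σy * σz)) *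
        Real.sqrt (π / ((σy ^ 2 - 2 * ξ * σy * σz + σz ^ 2) /
          (2 * (1 - ξ ^ 2) * σy ^ 2 * σz ^ 2)))) *
        rexp (-(1 / (2 * (σy ^ 2 - 2 * ξ * σy * σz + σz ^ 2))) * t ^ 2) from by ring]
  rw [const_eq σy σz ξ hσy hσz hξ]

set_option maxHeartbeats 1600000 in
theorem stmt11 (σy σz ξ : ℝ) (hσy : 0 < σy) (hσz : 0 < σz) (hξ : |ξ| < 1) :
    (∫ p : ℝ × ℝ, |(p.1 + |p.1|) - (p.2 + |p.2|)| * bvnDensity σy σz ξ p.1 p.2) =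
      (2 / Real.sqrt (2 * π)) * Real.sqrt (σy ^ 2 - 2 * ξ * σy * σz + σz ^ 2) := by
  have hr : 0 < 1 - ξ ^ 2 := by nlinarith [abs_nonneg ξ, sq_abs ξ]
  have hs2 : 0 < σy ^ 2 - 2 * ξ * σy * σz + σz ^ 2 := by
    nlinarith [sq_nonneg (σy - ξ * σz), mul_pos hr (mul_pos hσz hσz)]
  have hπ : 0 < π := pi_pos
  have hsq : 0 < Real.sqrt (1 - ξ ^ 2) := Real.sqrt_pos.2 hr
  have hmax : 0 < max σy σz := lt_max_of_lt_left hσy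
  have hcc : 0 < (1 - |ξ|) / (2 * (1 - ξ ^ 2) * (max σy σz) ^ 2) :=
    div_pos (by linarith) (by positivity)
  have hK : 0 < 1 / (2 * π * Real.sqrt (1 - ξ ^ 2) * σy * σz) := by positivity
  set cc : ℝ := (1 - |ξ|) / (2 * (1 - ξ ^ 2) * (max σy σz) ^ 2) with hccdef
  set K : ℝ := 1 / (2 * π * Real.sqrt (1 - ξ ^ 2) * σy * σz) with hKdef
  -- integrability of the main integrand
  have hGint : Integrable (fun p : ℝ × ℝ =>
      |(p.1 + |p.1|) - (p.2 + |p.2|)| * bvnDensity σy σz ξ p.1 p.2) := by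
    refine intdom ?_ hcc hcc (K := 2 * K) ?_
    · have := bvn_continuous σy σz ξ
      fun_prop
    · intro p
      rw [abs_of_nonneg (mul_nonneg (abs_nonneg _) (bvn_nonneg σy σz ξ hσy hσz hξ _ _))]
      have h1 : |(p.1 + |p.1|) - (p.2 + |p.2|)| ≤ 2 * (|p.1| + |p.2| + 1) := by
        rcases abs_cases ((p.1 + |p.1|) - (p.2 + |p.2|)) with ⟨e, _⟩|⟨e, _⟩ <;> rw [e] <;>
          nlinarith [abs_nonneg p.1, abs_nonneg p.2, le_abs_self p.1, neg_abs_le p.1,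
            le_abs_self p.2, neg_abs_le p.2]
      calc |(p.1 + |p.1|) - (p.2 + |p.2|)| * bvnDensity σy σz ξ p.1 p.2
          ≤ (2 * (|p.1| + |p.2| + 1)) *
            (K * (rexp (-cc * p.1 ^ 2) * rexp (-cc * p.2 ^ 2))) := by
            refine mul_le_mul h1 ?_ (bvn_nonneg σy σz ξ hσy hσz hξ _ _) (by positivity)
            exact bvn_le σy σz ξ hσy hσz hξ p.1 p.2
        _ = 2 * K * ((|p.1| + |p.2| + 1) * (rexp (-cc * p.1 ^ 2) * rexp (-cc * p.2 ^ 2))) := by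
            ring
  have hHint : Integrable (fun p : ℝ × ℝ => |p.1 - p.2| * bvnDensity σy σz ξ p.1 p.2) := by
    refine intdom ?_ hcc hcc (K := 2 * K) ?_
    · have := bvn_continuous σy σz ξ
      fun_prop
    · intro p
      rw [abs_of_nonneg (mul_nonneg (abs_nonneg _) (bvn_nonneg σy σz ξ hσy hσz hξ _ _))]
      have h1 : |p.1 - p.2| ≤ 2 * (|p.1| + |p.2| + 1) := by
        rcases abs_cases (p.1 - p.2) with ⟨e, _⟩|⟨e, _⟩ <;> rw [e] <;>
          nlinarith [abs_nonneg p.1, abs_nonneg p.2, le_abs_self p.1, neg_abs_le p.1,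
            le_abs_self p.2, neg_abs_le p.2]
      calc |p.1 - p.2| * bvnDensity σy σz ξ p.1 p.2
          ≤ (2 * (|p.1| + |p.2| + 1)) *
            (K * (rexp (-cc * p.1 ^ 2) * rexp (-cc * p.2 ^ 2))) := by
            refine mul_le_mul h1 ?_ (bvn_nonneg σy σz ξ hσy hσz hξ _ _) (by positivity)
            exact bvn_le σy σz ξ hσy hσz hξ p.1 p.2
        _ = 2 * K * ((|p.1| + |p.2| + 1) * (rexp (-cc * p.1 ^ 2) * rexp (-cc * p.2 ^ 2))) := by
            ring
  have hGnegint : Integrable (fun p : ℝ × ℝ =>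
      |((-p).1 + |(-p).1|) - ((-p).2 + |(-p).2|)| * bvnDensity σy σz ξ (-p).1 (-p).2) := by
    refine intdom ?_ hcc hcc (K := 2 * K) ?_
    · have := bvn_continuous σy σz ξ
      fun_prop
    · intro p
      simp only [Prod.fst_neg, Prod.snd_neg]
      rw [abs_of_nonneg (mul_nonneg (abs_nonneg _) (bvn_nonneg σy σz ξ hσy hσz hξ _ _))]
      have h1 : |(-p.1 + |(-p.1)|) - (-p.2 + |(-p.2)|)| ≤ 2 * (|p.1| + |p.2| + 1) := by
        rcases abs_cases ((-p.1 + |(-p.1)|) - (-p.2 + |(-p.2)|)) with ⟨e, _⟩|⟨e, _⟩ <;>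
          rw [e] <;> rw [abs_neg, abs_neg] <;>
          nlinarith [abs_nonneg p.1, abs_nonneg p.2, le_abs_self p.1, neg_abs_le p.1,
            le_abs_self p.2, neg_abs_le p.2]
      calc |(-p.1 + |(-p.1)|) - (-p.2 + |(-p.2)|)| * bvnDensity σy σz ξ (-p.1) (-p.2)
          ≤ (2 * (|p.1| + |p.2| + 1)) *
            (K * (rexp (-cc * p.1 ^ 2) * rexp (-cc * p.2 ^ 2))) := by
            refine mul_le_mul h1 ?_ (bvn_nonneg σy σz ξ hσy hσz hξ _ _) (by positivity)
            rw [bvn_neg]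
            have := bvn_le σy σz ξ hσy hσz hξ p.1 p.2
            calc bvnDensity σy σz ξ p.1 p.2
                ≤ K * (rexp (-cc * p.1 ^ 2) * rexp (-cc * p.2 ^ 2)) := this
              _ = K * (rexp (-cc * p.1 ^ 2) * rexp (-cc * p.2 ^ 2)) := rfl
        _ = 2 * K * ((|p.1| + |p.2| + 1) * (rexp (-cc * p.1 ^ 2) * rexp (-cc * p.2 ^ 2))) := by
            ring
  -- symmetry step
  have hnegmp : MeasurePreserving (fun p : ℝ × ℝ => -p) volume volume := by
    rw [Measure.volume_eq_prod]
    exact (Measure.measurePreserving_neg volume).prod (Measure.measurePreserving_neg volume)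
  have hsymm : (∫ p : ℝ × ℝ, |((-p).1 + |(-p).1|) - ((-p).2 + |(-p).2|)| *
        bvnDensity σy σz ξ (-p).1 (-p).2)
      = ∫ p : ℝ × ℝ, |(p.1 + |p.1|) - (p.2 + |p.2|)| * bvnDensity σy σz ξ p.1 p.2 :=
    hnegmp.integral_comp (MeasurableEquiv.neg (ℝ × ℝ)).measurableEmbedding
      (fun p : ℝ × ℝ => |(p.1 + |p.1|) - (p.2 + |p.2|)| * bvnDensity σy σz ξ p.1 p.2)
  have hGH : (∫ p : ℝ × ℝ, |(p.1 + |p.1|) - (p.2 + |p.2|)| * bvnDensity σy σz ξ p.1 p.2)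
      = ∫ p : ℝ × ℝ, |p.1 - p.2| * bvnDensity σy σz ξ p.1 p.2 := by
    have hadd : (∫ p : ℝ × ℝ, (|(p.1 + |p.1|) - (p.2 + |p.2|)| * bvnDensity σy σz ξ p.1 p.2
          + |((-p).1 + |(-p).1|) - ((-p).2 + |(-p).2|)| * bvnDensity σy σz ξ (-p).1 (-p).2))
        = (∫ p : ℝ × ℝ, |(p.1 + |p.1|) - (p.2 + |p.2|)| * bvnDensity σy σz ξ p.1 p.2)
          + ∫ p : ℝ × ℝ, |((-p).1 + |(-p).1|) - ((-p).2 + |(-p).2|)| *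
            bvnDensity σy σz ξ (-p).1 (-p).2 :=
      integral_add hGint hGnegint
    have hptw : ∀ p : ℝ × ℝ, |(p.1 + |p.1|) - (p.2 + |p.2|)| * bvnDensity σy σz ξ p.1 p.2
          + |((-p).1 + |(-p).1|) - ((-p).2 + |(-p).2|)| * bvnDensity σy σz ξ (-p).1 (-p).2
        = 2 * (|p.1 - p.2| * bvnDensity σy σz ξ p.1 p.2) := by
      intro p
      simp only [Prod.fst_neg, Prod.snd_neg, bvn_neg]
      linear_combination (bvnDensity σy σz ξ p.1 p.2) * quadid p.1 p.2
    have h2 : (∫ p : ℝ × ℝ, 2 * (|p.1 - p.2| * bvnDensity σy σz ξ p.1 p.2))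
        = 2 * ∫ p : ℝ × ℝ, |p.1 - p.2| * bvnDensity σy σz ξ p.1 p.2 :=
      integral_const_mul 2 _
    have := hadd.symm
    rw [hsymm] at this
    simp_rw [hptw] at this
    rw [h2] at this
    linarith
  rw [hGH]
  -- Fubini and computation
  have hHint2 : Integrable (fun p : ℝ × ℝ => |p.1 - p.2| * bvnDensity σy σz ξ p.1 p.2)
      ((volume : Measure ℝ).prod volume) := by
    rw [← Measure.volume_eq_prod]; exact hHint
  rw [Measure.volume_eq_prod, integral_prod _ hHint2]
  have hstep2 : ∀ y : ℝ, (∫ z : ℝ, |y - z| * bvnDensity σy σz ξ y z)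
      = ∫ t : ℝ, |t| * bvnDensity σy σz ξ y (y - t) := by
    intro y
    have h := integral_sub_left_eq_self (μ := volume)
      (fun z => |y - z| * bvnDensity σy σz ξ y z) y
    simp only [sub_sub_cancel] at h
    exact h.symm
  simp_rw [hstep2]
  have hsw : Integrable (Function.uncurry fun y t : ℝ => |t| * bvnDensity σy σz ξ y (y - t))
      ((volume : Measure ℝ).prod volume) := by
    rw [← Measure.volume_eq_prod]
    have main : Integrable (fun p : ℝ × ℝ => |p.2| * bvnDensity σy σz ξ p.1 (p.1 - p.2)) := ?_
    · exact main
    refine intdom ?_ (half_pos hcc) (by positivity : (0:ℝ) < cc / 4) (K := K) ?_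
    · have := bvn_continuous σy σz ξ
      have hc2 : Continuous fun p : ℝ × ℝ => bvnDensity σy σz ξ p.1 (p.1 - p.2) := by
        fun_prop
      fun_prop
    · intro p
      have hb := bvn_nonneg σy σz ξ hσy hσz hξ p.1 (p.1 - p.2)
      rw [abs_of_nonneg (mul_nonneg (abs_nonneg _) hb)]
      calc |p.2| * bvnDensity σy σz ξ p.1 (p.1 - p.2)
          ≤ |p.2| * (K * (rexp (-cc * p.1 ^ 2) * rexp (-cc * (p.1 - p.2) ^ 2))) :=
            mul_le_mul_of_nonneg_left (bvn_le σy σz ξ hσy hσz hξ p.1 (p.1 - p.2)) (abs_nonneg _)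
        _ ≤ |p.2| * (K * (rexp (-(cc / 2) * p.1 ^ 2) * rexp (-(cc / 4) * p.2 ^ 2))) := by
            refine mul_le_mul_of_nonneg_left (mul_le_mul_of_nonneg_left ?_ hK.le) (abs_nonneg _)
            rw [← Real.exp_add, ← Real.exp_add]
            refine Real.exp_le_exp.2 ?_
            nlinarith [mul_nonneg hcc.le (sq_nonneg (2 * (p.1 - p.2) + p.2)),
              mul_nonneg hcc.le (sq_nonneg (p.1 - p.2))]
        _ ≤ K * ((|p.1| + |p.2| + 1) *
            (rexp (-(cc / 2) * p.1 ^ 2) * rexp (-(cc / 4) * p.2 ^ 2))) := by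
            rw [show |p.2| * (K * (rexp (-(cc / 2) * p.1 ^ 2) * rexp (-(cc / 4) * p.2 ^ 2)))
                = K * (|p.2| * (rexp (-(cc / 2) * p.1 ^ 2) * rexp (-(cc / 4) * p.2 ^ 2)))
              from by ring]
            refine mul_le_mul_of_nonneg_left ?_ hK.le
            refine mul_le_mul_of_nonneg_right ?_ (by positivity)
            linarith [abs_nonneg p.1]
  rw [integral_integral_swap hsw]
  simp_rw [integral_const_mul, inner_int σy σz ξ hσy hσz hξ]
  simp_rw [show ∀ t : ℝ, |t| * ((1 / (Real.sqrt (2 * π) *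
        Real.sqrt (σy ^ 2 - 2 * ξ * σy * σz + σz ^ 2))) *
        rexp (-(1 / (2 * (σy ^ 2 - 2 * ξ * σy * σz + σz ^ 2))) * t ^ 2))
      = (1 / (Real.sqrt (2 * π) * Real.sqrt (σy ^ 2 - 2 * ξ * σy * σz + σz ^ 2))) *
        (|t| * rexp (-(1 / (2 * (σy ^ 2 - 2 * ξ * σy * σz + σz ^ 2))) * t ^ 2))
    from fun t => by ring]
  rw [integral_const_mul,
    absint (show (0:ℝ) < 1 / (2 * (σy ^ 2 - 2 * ξ * σy * σz + σz ^ 2)) by positivity)]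
  rw [one_div_one_div]
  have h2 : 0 < Real.sqrt (2 * π) := Real.sqrt_pos.2 (by positivity)
  have h3 : 0 < Real.sqrt (σy ^ 2 - 2 * ξ * σy * σz + σz ^ 2) := Real.sqrt_pos.2 hs2
  have hms : Real.sqrt (σy ^ 2 - 2 * ξ * σy * σz + σz ^ 2) *
      Real.sqrt (σy ^ 2 - 2 * ξ * σy * σz + σz ^ 2) = σy ^ 2 - 2 * ξ * σy * σz + σz ^ 2 :=
    Real.mul_self_sqrt hs2.le
  have hms2 : Real.sqrt (σy ^ 2 - 2 * ξ * σy * σz + σz ^ 2) ^ 2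
      = σy ^ 2 - 2 * ξ * σy * σz + σz ^ 2 := Real.sq_sqrt hs2.le
  rw [div_mul_eq_mul_div, div_mul_eq_mul_div, div_eq_div_iff (by positivity) (by positivity)]
  linear_combination (-(2 * Real.sqrt (2 * π))) * hms2
end

section
/- The function g(ρ) = √((1-ρ)/π) + √((1-ρ²)/(4π)) on the open interval (-1, 1) attains its unique maximum at ρ = (1-√5)/2. -/
open Real

noncomputable def g (ρ : ℝ) : ℝ :=
  Real.sqrt ((1 - ρ) / π) + Real.sqrt ((1 - ρ ^ 2) / (4 * π))

lemma sqrt_four : Real.sqrt 4 = 2 := by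
  rw [show (4:ℝ) = 2^2 by norm_num, Real.sqrt_sq (by norm_num)]

lemma g_eq (ρ : ℝ) (h1 : -1 ≤ ρ) (h2 : ρ ≤ 1) :
    g ρ = (Real.sqrt (1-ρ) * (2 + Real.sqrt (1+ρ))) / (2 * Real.sqrt π) := by
  have hπ : (0:ℝ) < Real.sqrt π := Real.sqrt_pos.mpr Real.pi_pos
  unfold g
  rw [show (1 - ρ^2) = (1-ρ)*(1+ρ) by ring,
    Real.sqrt_div (by linarith) π,
    Real.sqrt_div (mul_nonneg (by linarith) (by linarith)) (4*π),
    Real.sqrt_mul (by linarith) (1+ρ),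
    Real.sqrt_mul (by norm_num : (0:ℝ) ≤ 4) π, sqrt_four]
  field_simp

theorem stmt15 :
    (1 - Real.sqrt 5) / 2 ∈ Set.Ioo (-1 : ℝ) 1 ∧
    ∀ ρ ∈ Set.Ioo (-1 : ℝ) 1, ρ ≠ (1 - Real.sqrt 5) / 2 →
      g ρ < g ((1 - Real.sqrt 5) / 2) := by
  set s := Real.sqrt 5 with hs_def
  have hs5 : s ^ 2 = 5 := Real.sq_sqrt (by norm_num)
  have hs0 : 0 ≤ s := Real.sqrt_nonneg 5
  have h2s : 2 < s := by nlinarith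
  have h3s : s < 3 := by nlinarith
  have hmem : (1 - s) / 2 ∈ Set.Ioo (-1:ℝ) 1 := ⟨by linarith, by linarith⟩
  refine ⟨hmem, ?_⟩
  intro ρ hρ hρne
  obtain ⟨hρ1, hρ2⟩ := hρ
  have hπ : (0:ℝ) < Real.sqrt π := Real.sqrt_pos.mpr Real.pi_pos
  rw [g_eq ρ (by linarith) (by linarith), g_eq _ (by linarith) (by linarith)]
  -- values at ρ₀
  have hB : Real.sqrt (1 + (1-s)/2) = (s-1)/2 := by
    rw [show 1 + (1-s)/2 = ((s-1)/2)^2 by linear_combination (-1/4) * hs5,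
      Real.sqrt_sq (by linarith)]
  rw [hB]
  set a := Real.sqrt (1-ρ) with ha_def
  set b := Real.sqrt (1+ρ) with hb_def
  set A := Real.sqrt (1 - (1-s)/2) with hA_def
  have ha0 : 0 ≤ a := Real.sqrt_nonneg _
  have hb0 : 0 ≤ b := Real.sqrt_nonneg _
  have ha2 : a ^ 2 = 1 - ρ := Real.sq_sqrt (by linarith)
  have hb2 : b ^ 2 = 1 + ρ := Real.sq_sqrt (by linarith)
  have hA2 : A ^ 2 = (1 + s) / 2 := by
    rw [hA_def, Real.sq_sqrt (by linarith)]; ring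
  have hA0 : 0 < A := by
    rw [hA_def]; exact Real.sqrt_pos.mpr (by linarith)
  have hbne : b ≠ (s-1)/2 := by
    intro h
    apply hρne
    have hρeq : ρ = b^2 - 1 := by linarith
    rw [hρeq, h]
    linear_combination (1/4) * hs5
  have hsqne : 0 < (b - (s-1)/2)^2 := by
    have : b - (s-1)/2 ≠ 0 := sub_ne_zero.mpr hbne
    positivity
  have hquad : 0 < b^2 + (3+s)*b + (5+5*s)/2 := by nlinarith
  have hprod : 0 < (b - (s-1)/2)^2 * (b^2 + (3+s)*b + (5+5*s)/2) :=
    mul_pos hsqne hquad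
  -- key polynomial inequality
  have key2 : 2*(2-b^2)*(2+b)^2 < 11 + 5*s := by nlinarith [hprod, hs5]
  -- compare squares
  have hX2 : (a * (2+b))^2 = (2-b^2)*(2+b)^2 := by
    have : a^2 = 2 - b^2 := by linarith
    rw [mul_pow, this]
  have hY2 : (A * (2 + (s-1)/2))^2 = (11 + 5*s)/2 := by
    rw [mul_pow, hA2]
    linear_combination ((s+7)/8) * hs5
  have hXY : (a * (2+b))^2 < (A * (2 + (s-1)/2))^2 := by
    rw [hX2, hY2]; linarith
  have hYpos : 0 < A * (2 + (s-1)/2) := mul_pos hA0 (by linarith)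
  have hlt : a * (2+b) < A * (2 + (s-1)/2) := by
    by_contra h
    push_neg at h
    have : (A * (2 + (s-1)/2))^2 ≤ (a * (2+b))^2 :=
      pow_le_pow_left₀ (le_of_lt hYpos) h 2
    linarith
  have h2π : (0:ℝ) < 2 * Real.sqrt π := by linarith
  exact (div_lt_div_iff_of_pos_right h2π).mpr hlt
end
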